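/- There is no 4-way latin square of order 6 with exactly 9 fixed cells, i.e., 9 ∉ I⁴[6]. -/

import Mathlib

/-- A μ-way latin square of order n: μ latin squares on symbols `Fin n` such that
in every cell the μ entries are all equal or pairwise distinct. -/
def IsMuWayLatinSquare {μ n : ℕ} (L : Fin μ → Fin n → Fin n → Fin n) : Prop :=
  (∀ m i, Function.Injective (L m i)) ∧
  (∀ m j, Function.Injective (fun i => L m i j)) ∧
  (∀ i j, (∀ a b, L a i j = L b i j) ∨ Function.Injective (fun a => L a i j))

/-- A cell is fixed when the μ entries there coincide. -/
def IsFixedCell {μ n : ℕ} (L : Fin μ → Fin n → Fin n → Fin n) (i j : Fin n) : Prop :=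
  ∀ a b, L a i j = L b i j

instance {μ n : ℕ} (L : Fin μ → Fin n → Fin n → Fin n) (i j : Fin n) :
    Decidable (IsFixedCell L i j) :=
  inferInstanceAs (Decidable (∀ a b, L a i j = L b i j))

/-- The number of fixed cells. -/
def numFixed {μ n : ℕ} (L : Fin μ → Fin n → Fin n → Fin n) : ℕ :=
  (Finset.univ.filter fun p : Fin n × Fin n => IsFixedCell L p.1 p.2).card

/-- The number of fixed cells in row `i`. -/
def rowFixed {μ n : ℕ} (L : Fin μ → Fin n → Fin n → Fin n) (i : Fin n) : ℕ :=
  (Finset.univ.filter fun j : Fin n => IsFixedCell L i j).card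

namespace Aux

variable {L : Fin 4 → Fin 6 → Fin 6 → Fin 6}

lemma numFixed_eq_sum (L : Fin 4 → Fin 6 → Fin 6 → Fin 6) :
    numFixed L = ∑ i, rowFixed L i := by
  unfold numFixed rowFixed
  rw [Finset.card_filter, Fintype.sum_prod_type]
  exact Finset.sum_congr rfl fun i _ => (Finset.card_filter _ _).symm

lemma card7 (g : Fin 4 → Fin 6) (hg : Function.Injective g)
    (s1 s2 s3 : Fin 6) (h12 : s1 ≠ s2) (h13 : s1 ≠ s3) (h23 : s2 ≠ s3)
    (hav : ∀ m, g m ≠ s1 ∧ g m ≠ s2 ∧ g m ≠ s3) : False := by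
  have hsub : Finset.univ.image g ⊆ ({s1, s2, s3} : Finset (Fin 6))ᶜ := by
    intro x hx
    simp only [Finset.mem_image] at hx
    obtain ⟨m, -, rfl⟩ := hx
    simp only [Finset.mem_compl, Finset.mem_insert, Finset.mem_singleton]
    push_neg
    exact ⟨(hav m).1, (hav m).2.1, (hav m).2.2⟩
  have h1 : (Finset.univ.image g).card = 4 := by
    rw [Finset.card_image_of_injective _ hg]; simp
  have h2 : (({s1, s2, s3} : Finset (Fin 6))ᶜ).card = 3 := by
    rw [Finset.card_compl]
    have : ({s1, s2, s3} : Finset (Fin 6)).card = 3 := by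
      rw [Finset.card_insert_of_notMem (by simp [h12, h13]),
        Finset.card_insert_of_notMem (by simp [h23]), Finset.card_singleton]
    simp [this]
  have := Finset.card_le_card hsub
  omega

end Aux

namespace Aux
variable {L : Fin 4 → Fin 6 → Fin 6 → Fin 6}

lemma nonfixed_inj (hL : IsMuWayLatinSquare L) {i j : Fin 6}
    (h : ¬ IsFixedCell L i j) : Function.Injective (fun a => L a i j) :=
  (hL.2.2 i j).resolve_left h

lemma fixed_val {i j : Fin 6} (h : IsFixedCell L i j) (a : Fin 4) :
    L a i j = L 0 i j := h a 0

/-- A fixed cell in the same row forbids its symbol at a non-fixed cell. -/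
lemma row_forbids (hL : IsMuWayLatinSquare L) {i b j : Fin 6}
    (hf : IsFixedCell L i b) (hbj : b ≠ j) (a : Fin 4) : L a i j ≠ L 0 i b := by
  intro h
  have : L a i j = L a i b := by rw [h, ← fixed_val hf a]
  exact hbj (hL.1 a i this).symm

lemma col_forbids (hL : IsMuWayLatinSquare L) {i' i j : Fin 6}
    (hf : IsFixedCell L i' j) (hi : i' ≠ i) (a : Fin 4) : L a i j ≠ L 0 i' j := by
  intro h
  have : L a i j = L a i' j := by rw [h, ← fixed_val hf a]
  exact hi (hL.2.1 a j this).symm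

/-- Core: a non-fixed cell cannot have three distinct forbidden symbols. -/
lemma forbid (hL : IsMuWayLatinSquare L) {i j : Fin 6} (hnf : ¬ IsFixedCell L i j)
    {s1 s2 s3 : Fin 6} (h12 : s1 ≠ s2) (h13 : s1 ≠ s3) (h23 : s2 ≠ s3)
    (f1 : ∀ a, L a i j ≠ s1) (f2 : ∀ a, L a i j ≠ s2) (f3 : ∀ a, L a i j ≠ s3) : False :=
  card7 (fun a => L a i j) (nonfixed_inj hL hnf) s1 s2 s3 h12 h13 h23
    (fun m => ⟨f1 m, f2 m, f3 m⟩)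

/-- Three fixed cells in a row plus a non-fixed cell in the same row: impossible. -/
lemma row3 (hL : IsMuWayLatinSquare L) {i b1 b2 b3 j : Fin 6}
    (h1 : IsFixedCell L i b1) (h2 : IsFixedCell L i b2) (h3 : IsFixedCell L i b3)
    (d12 : b1 ≠ b2) (d13 : b1 ≠ b3) (d23 : b2 ≠ b3)
    (hnf : ¬ IsFixedCell L i j) : False := by
  have n1 : b1 ≠ j := fun h => hnf (h ▸ h1)
  have n2 : b2 ≠ j := fun h => hnf (h ▸ h2)
  have n3 : b3 ≠ j := fun h => hnf (h ▸ h3)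
  exact forbid hL hnf (fun h => d12 (hL.1 0 i h)) (fun h => d13 (hL.1 0 i h))
    (fun h => d23 (hL.1 0 i h))
    (row_forbids hL h1 n1) (row_forbids hL h2 n2) (row_forbids hL h3 n3)

/-- Three fixed cells in a column plus a non-fixed cell in the same column: impossible. -/
lemma col3 (hL : IsMuWayLatinSquare L) {i1 i2 i3 i j : Fin 6}
    (h1 : IsFixedCell L i1 j) (h2 : IsFixedCell L i2 j) (h3 : IsFixedCell L i3 j)
    (d12 : i1 ≠ i2) (d13 : i1 ≠ i3) (d23 : i2 ≠ i3)
    (hnf : ¬ IsFixedCell L i j) : False := by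
  have n1 : i1 ≠ i := fun h => hnf (h ▸ h1)
  have n2 : i2 ≠ i := fun h => hnf (h ▸ h2)
  have n3 : i3 ≠ i := fun h => hnf (h ▸ h3)
  exact forbid hL hnf (fun h => d12 (hL.2.1 0 j h)) (fun h => d13 (hL.2.1 0 j h))
    (fun h => d23 (hL.2.1 0 j h))
    (col_forbids hL h1 n1) (col_forbids hL h2 n2) (col_forbids hL h3 n3)

/-- Three fixed cells with the same symbol in pairwise distinct rows, plus a row
with no fixed cell of that symbol: impossible. -/
lemma sym3 (hL : IsMuWayLatinSquare L) {r1 r2 r3 c1 c2 c3 i0 s : Fin 6}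
    (h1 : IsFixedCell L r1 c1) (h2 : IsFixedCell L r2 c2) (h3 : IsFixedCell L r3 c3)
    (v1 : L 0 r1 c1 = s) (v2 : L 0 r2 c2 = s) (v3 : L 0 r3 c3 = s)
    (d12 : r1 ≠ r2) (d13 : r1 ≠ r3) (d23 : r2 ≠ r3)
    (h0 : ∀ j, ¬ (IsFixedCell L i0 j ∧ L 0 i0 j = s)) : False := by
  -- columns are pairwise distinct
  have cd12 : c1 ≠ c2 := by
    rintro rfl; exact d12 (hL.2.1 0 c1 (v1.trans v2.symm))
  have cd13 : c1 ≠ c3 := by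
    rintro rfl; exact d13 (hL.2.1 0 c1 (v1.trans v3.symm))
  have cd23 : c2 ≠ c3 := by
    rintro rfl; exact d23 (hL.2.1 0 c2 (v2.trans v3.symm))
  -- in row i0, each square has s somewhere
  have hex : ∀ m : Fin 4, ∃ j, L m i0 j = s := fun m =>
    (Finite.injective_iff_surjective.mp (hL.1 m i0)) s
  choose g hg using hex
  have hginj : Function.Injective g := by
    intro m1 m2 h
    rcases hL.2.2 i0 (g m1) with hfix | hinj
    · exact absurd ⟨hfix, (hfix 0 m1).trans (hg m1)⟩ (h0 (g m1))
    · exact hinj (show L m1 i0 (g m1) = L m2 i0 (g m1) by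
        rw [hg m1, h, hg m2])
  refine card7 g hginj c1 c2 c3 cd12 cd13 cd23 (fun m => ⟨?_, ?_, ?_⟩)
  all_goals intro h
  · have hr : r1 ≠ i0 := by rintro rfl; exact h0 c1 ⟨h1, v1⟩
    have : L m r1 c1 = L m i0 c1 := by
      rw [fixed_val h1, v1, ← h, hg m]
    exact hr (hL.2.1 m c1 this)
  · have hr : r2 ≠ i0 := by rintro rfl; exact h0 c2 ⟨h2, v2⟩
    have : L m r2 c2 = L m i0 c2 := by
      rw [fixed_val h2, v2, ← h, hg m]
    exact hr (hL.2.1 m c2 this)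
  · have hr : r3 ≠ i0 := by rintro rfl; exact h0 c3 ⟨h3, v3⟩
    have : L m r3 c3 = L m i0 c3 := by
      rw [fixed_val h3, v3, ← h, hg m]
    exact hr (hL.2.1 m c3 this)

end Aux

namespace Aux
variable {L : Fin 4 → Fin 6 → Fin 6 → Fin 6}

lemma rowZero {i : Fin 6} (h : rowFixed L i = 0) : ∀ j, ¬ IsFixedCell L i j := by
  intro j hj
  have : j ∈ Finset.univ.filter fun j => IsFixedCell L i j := by simp [hj]
  rw [Finset.card_eq_zero.mp h] at this
  simp at this

lemma rowFixed_pos {i j : Fin 6} (h : IsFixedCell L i j) : 1 ≤ rowFixed L i := by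
  refine Finset.card_pos.mpr ⟨j, ?_⟩
  simp [h]

lemma rowFixed_le_two (hL : IsMuWayLatinSquare L) {i : Fin 6}
    (h : ∃ j, ¬ IsFixedCell L i j) : rowFixed L i ≤ 2 := by
  obtain ⟨j, hj⟩ := h
  by_contra hgt
  push_neg at hgt
  obtain ⟨b1, b2, b3, hb1, hb2, hb3, d12, d13, d23⟩ :=
    Finset.two_lt_card_iff.mp hgt
  simp only [Finset.mem_filter, Finset.mem_univ, true_and] at hb1 hb2 hb3
  exact row3 hL hb1 hb2 hb3 d12 d13 d23 hj

lemma rowOne {i j0 : Fin 6} (h : rowFixed L i = 1) (h0 : IsFixedCell L i j0) :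
    ∀ j, IsFixedCell L i j → j = j0 := by
  intro j hj
  obtain ⟨x, hx⟩ := Finset.card_eq_one.mp h
  have hjx : j ∈ Finset.univ.filter fun j => IsFixedCell L i j := by simp [hj]
  have hj0x : j0 ∈ Finset.univ.filter fun j => IsFixedCell L i j := by simp [h0]
  rw [hx] at hjx hj0x
  simp only [Finset.mem_singleton] at hjx hj0x
  rw [hjx, hj0x]

lemma rowTwo {i a0 : Fin 6} (h : rowFixed L i = 2) (h0 : IsFixedCell L i a0) :
    ∃ b, b ≠ a0 ∧ IsFixedCell L i b ∧ ∀ j, IsFixedCell L i j → j = a0 ∨ j = b := by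
  obtain ⟨x, y, hxy, hs⟩ := Finset.card_eq_two.mp h
  have hmem : ∀ j, IsFixedCell L i j → j = x ∨ j = y := by
    intro j hj
    have : j ∈ Finset.univ.filter fun j => IsFixedCell L i j := by simp [hj]
    rw [hs] at this
    simpa using this
  have hxf : IsFixedCell L i x := by
    have : x ∈ Finset.univ.filter fun j => IsFixedCell L i j := by rw [hs]; simp
    simpa using this
  have hyf : IsFixedCell L i y := by
    have : y ∈ Finset.univ.filter fun j => IsFixedCell L i j := by rw [hs]; simp
    simpa using this
  rcases hmem a0 h0 with rfl | rfl
  · exact ⟨y, fun h => hxy h.symm, hyf, hmem⟩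
  · exact ⟨x, hxy, hxf, fun j hj => (hmem j hj).symm⟩

lemma transpose_is (hL : IsMuWayLatinSquare L) :
    IsMuWayLatinSquare (fun m i j => L m j i) :=
  ⟨fun m i => hL.2.1 m i, fun m j => hL.1 m j, fun i j => hL.2.2 j i⟩

lemma transpose_numFixed : numFixed (fun m i j => L m j i) = numFixed L := by
  unfold numFixed
  refine Finset.card_bij (fun p _ => (p.2, p.1)) ?_ ?_ ?_
  · intro p hp
    simp only [Finset.mem_filter, Finset.mem_univ, true_and] at hp ⊢
    exact hp
  · intro p _ q _ h
    simp only [Prod.mk.injEq] at h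
    exact Prod.ext h.2 h.1
  · intro p hp
    refine ⟨(p.2, p.1), ?_, rfl⟩
    simp only [Finset.mem_filter, Finset.mem_univ, true_and] at hp ⊢
    exact hp

end Aux

namespace Aux
variable {L : Fin 4 → Fin 6 → Fin 6 → Fin 6}

lemma rowFull {i : Fin 6} (h : ∀ j, IsFixedCell L i j) : rowFixed L i = 6 := by
  unfold rowFixed
  rw [Finset.filter_true_of_mem (fun j _ => h j)]
  simp

lemma rowOne' {i : Fin 6} (h : rowFixed L i = 1) :
    ∃ j0, IsFixedCell L i j0 ∧ ∀ j, IsFixedCell L i j → j = j0 := by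
  obtain ⟨x, hx⟩ := Finset.card_eq_one.mp h
  have hxf : IsFixedCell L i x := by
    have : x ∈ Finset.univ.filter fun j => IsFixedCell L i j := by rw [hx]; simp
    simpa using this
  refine ⟨x, hxf, fun j hj => ?_⟩
  have : j ∈ Finset.univ.filter fun j => IsFixedCell L i j := by simp [hj]
  rw [hx] at this
  simpa using this

lemma rowTwo' {i : Fin 6} (h : rowFixed L i = 2) :
    ∃ x y, x ≠ y ∧ IsFixedCell L i x ∧ IsFixedCell L i y ∧
      ∀ j, IsFixedCell L i j → j = x ∨ j = y := by
  obtain ⟨x, y, hxy, hs⟩ := Finset.card_eq_two.mp h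
  have hxf : IsFixedCell L i x := by
    have : x ∈ Finset.univ.filter fun j => IsFixedCell L i j := by rw [hs]; simp
    simpa using this
  have hyf : IsFixedCell L i y := by
    have : y ∈ Finset.univ.filter fun j => IsFixedCell L i j := by rw [hs]; simp
    simpa using this
  refine ⟨x, y, hxy, hxf, hyf, fun j hj => ?_⟩
  have : j ∈ Finset.univ.filter fun j => IsFixedCell L i j := by simp [hj]
  rw [hs] at this
  simpa using this

lemma noFixedRow (hL : IsMuWayLatinSquare L) (h9 : numFixed L = 9) :
    ∀ R, ¬ (∀ j, IsFixedCell L R j) := by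
  intro R hR
  have hsum : ∑ i, rowFixed L i = 9 := by rw [← numFixed_eq_sum]; exact h9
  have hrR : rowFixed L R = 6 := rowFull hR
  have hsplit : rowFixed L R + ∑ i ∈ Finset.univ.erase R, rowFixed L i = 9 := by
    rw [← hsum, Finset.add_sum_erase _ _ (Finset.mem_univ R)]
  have herase : ∑ i ∈ Finset.univ.erase R, rowFixed L i = 3 := by omega
  have hcard5 : (Finset.univ.erase R).card = 5 := by
    rw [Finset.card_erase_of_mem (Finset.mem_univ R)]; simp
  -- no fully fixed column
  have hNC : ∀ j0, ¬ (∀ i, IsFixedCell L i j0) := by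
    intro j0 hcol
    have h1 : ∀ i ∈ Finset.univ.erase R, 1 ≤ rowFixed L i :=
      fun i _ => rowFixed_pos (hcol i)
    have h2 : (Finset.univ.erase R).card ≤ ∑ i ∈ Finset.univ.erase R, rowFixed L i := by
      calc (Finset.univ.erase R).card
          = ∑ _i ∈ Finset.univ.erase R, 1 := by simp
        _ ≤ _ := Finset.sum_le_sum h1
    omega
  -- no other fully fixed row
  have hNR : ∀ i, i ≠ R → ¬ (∀ j, IsFixedCell L i j) := by
    intro i hiR hfull
    have h6 := rowFull hfull
    have : rowFixed L i ≤ ∑ i' ∈ Finset.univ.erase R, rowFixed L i' :=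
      Finset.single_le_sum (fun _ _ => Nat.zero_le _) (by simp [hiR])
    omega
  -- no 3 fixed cells in a column
  have hcol3 : ∀ (j i1 i2 i3 : Fin 6), i1 ≠ i2 → i1 ≠ i3 → i2 ≠ i3 →
      IsFixedCell L i1 j → IsFixedCell L i2 j → IsFixedCell L i3 j → False := by
    intro j i1 i2 i3 d12 d13 d23 f1 f2 f3
    obtain ⟨i, hi⟩ := not_forall.mp (hNC j)
    exact col3 hL f1 f2 f3 d12 d13 d23 hi
  have hle2 : ∀ i, i ≠ R → rowFixed L i ≤ 2 := by
    intro i hiR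
    refine rowFixed_le_two hL ?_
    by_contra h; push_neg at h; exact hNR i hiR h
  by_cases hcase : ∃ i, i ≠ R ∧ rowFixed L i = 2
  · -- a row with two fixed cells: pigeonhole on the fixed row's symbols
    obtain ⟨i, hiR, h2⟩ := hcase
    obtain ⟨x, y, hxy, hfx, hfy, honly⟩ := rowTwo' h2
    have ht : L 0 i x ≠ L 0 i y := fun h => hxy (hL.1 0 i h)
    have hvj : ∀ j, j ≠ x → j ≠ y → L 0 R j = L 0 i x ∨ L 0 R j = L 0 i y := by
      intro j hjx hjy
      by_contra hcon
      push_neg at hcon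
      have hnf : ¬ IsFixedCell L i j := by
        intro h
        rcases honly j h with rfl | rfl
        · exact hjx rfl
        · exact hjy rfl
      exact forbid hL hnf ht (Ne.symm hcon.1) (Ne.symm hcon.2)
        (row_forbids hL hfx (Ne.symm hjx)) (row_forbids hL hfy (Ne.symm hjy))
        (col_forbids hL (hR j) (Ne.symm hiR))
    have hcard : 2 < (({x, y} : Finset (Fin 6))ᶜ).card := by
      rw [Finset.card_compl]
      have h1 : ({x, y} : Finset (Fin 6)).card ≤ 2 :=
        le_trans (Finset.card_insert_le _ _) (by simp)
      have h6 : Fintype.card (Fin 6) = 6 := by simp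
      omega
    obtain ⟨j1, j2, j3, hj1, hj2, hj3, d12, d13, d23⟩ := Finset.two_lt_card_iff.mp hcard
    simp only [Finset.mem_compl, Finset.mem_insert, Finset.mem_singleton, not_or] at hj1 hj2 hj3
    have vinj : ∀ {p q : Fin 6}, L 0 R p = L 0 R q → p = q := fun h => hL.1 0 R h
    rcases hvj j1 hj1.1 hj1.2 with h1 | h1 <;>
      rcases hvj j2 hj2.1 hj2.2 with h2 | h2 <;>
        rcases hvj j3 hj3.1 hj3.2 with h3 | h3 <;>
          first
          | exact d12 (vinj (h1.trans h2.symm))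
          | exact d13 (vinj (h1.trans h3.symm))
          | exact d23 (vinj (h2.trans h3.symm))
  · -- three rows with exactly one fixed cell each
    push_neg at hcase
    have hle1 : ∀ i, i ≠ R → rowFixed L i ≤ 1 := by
      intro i hiR
      have ha := hle2 i hiR
      have hb := hcase i hiR
      omega
    set T := (Finset.univ.erase R).filter (fun i => rowFixed L i = 1) with hTdef
    have hT : T.card = 3 := by
      have hco : ∑ i ∈ Finset.univ.erase R, rowFixed L i
          = ∑ i ∈ Finset.univ.erase R, (if rowFixed L i = 1 then 1 else 0) := by
        refine Finset.sum_congr rfl fun i hi => ?_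
        have hiR : i ≠ R := (Finset.mem_erase.mp hi).1
        have := hle1 i hiR
        have h01 : rowFixed L i = 0 ∨ rowFixed L i = 1 := by omega
        rcases h01 with h | h <;> simp [h]
      rw [hco, ← Finset.card_filter] at herase
      rw [hTdef, herase]
    obtain ⟨i1, i2, i3, d12, d13, d23, hTeq⟩ := Finset.card_eq_three.mp hT
    have hmemT : ∀ k, k ∈ T → k ≠ R ∧ rowFixed L k = 1 := by
      intro k hk
      rw [hTdef] at hk
      simp only [Finset.mem_filter, Finset.mem_erase, Finset.mem_univ] at hk
      exact ⟨hk.1.1, hk.2⟩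
    have hi1 := hmemT i1 (by rw [hTeq]; simp)
    have hi2 := hmemT i2 (by rw [hTeq]; simp)
    have hi3 := hmemT i3 (by rw [hTeq]; simp)
    obtain ⟨j1, hf1, hu1⟩ := rowOne' hi1.2
    obtain ⟨j2, hf2, hu2⟩ := rowOne' hi2.2
    obtain ⟨j3, hf3, hu3⟩ := rowOne' hi3.2
    -- the columns are distinct
    have cj12 : j1 ≠ j2 := by
      rintro rfl
      exact hcol3 j1 R i1 i2 (Ne.symm hi1.1) (Ne.symm hi2.1) d12 (hR j1) hf1 hf2
    have cj13 : j1 ≠ j3 := by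
      rintro rfl
      exact hcol3 j1 R i1 i3 (Ne.symm hi1.1) (Ne.symm hi3.1) d13 (hR j1) hf1 hf3
    have cj23 : j2 ≠ j3 := by
      rintro rfl
      exact hcol3 j2 R i2 i3 (Ne.symm hi2.1) (Ne.symm hi3.1) d23 (hR j2) hf2 hf3
    -- a row with no fixed cells at all
    have hzero : ∃ i4, (∀ j, ¬ IsFixedCell L i4 j) := by
      have h4 : ({R, i1, i2, i3} : Finset (Fin 6)).card ≤ 4 := by
        refine le_trans (Finset.card_insert_le _ _) ?_
        refine Nat.add_le_add_right ?_ 1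
        refine le_trans (Finset.card_insert_le _ _) ?_
        refine Nat.add_le_add_right ?_ 1
        refine le_trans (Finset.card_insert_le _ _) ?_
        simp
      have hpos : 0 < (({R, i1, i2, i3} : Finset (Fin 6))ᶜ).card := by
        rw [Finset.card_compl]
        have h6 : Fintype.card (Fin 6) = 6 := by simp
        omega
      obtain ⟨i4, hi4⟩ := Finset.card_pos.mp hpos
      simp only [Finset.mem_compl, Finset.mem_insert, Finset.mem_singleton, not_or] at hi4
      refine ⟨i4, ?_⟩
      have hr0 : rowFixed L i4 = 0 := by
        have hn1 : rowFixed L i4 ≠ 1 := by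
          intro h
          have : i4 ∈ T := by
            rw [hTdef]
            simp [Finset.mem_filter, Finset.mem_erase, hi4.1, h]
          rw [hTeq] at this
          simp only [Finset.mem_insert, Finset.mem_singleton] at this
          rcases this with h | h | h
          · exact hi4.2.1 h
          · exact hi4.2.2.1 h
          · exact hi4.2.2.2 h
        have := hle1 i4 hi4.1
        omega
      exact rowZero hr0
    obtain ⟨i4, hi4z⟩ := hzero
    -- symbols of the three singleton cells differ pairwise from each other
    have hsur : ∀ s : Fin 6, ∃ j, L 0 R j = s :=
      Finite.injective_iff_surjective.mp (hL.1 0 R)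
    have hs12 : L 0 i1 j1 ≠ L 0 i2 j2 := by
      intro h
      obtain ⟨jst, hjst⟩ := hsur (L 0 i1 j1)
      exact sym3 hL hf1 hf2 (hR jst) rfl h.symm hjst d12 hi1.1 hi2.1
        (fun j hj => hi4z j hj.1)
    have hs13 : L 0 i1 j1 ≠ L 0 i3 j3 := by
      intro h
      obtain ⟨jst, hjst⟩ := hsur (L 0 i1 j1)
      exact sym3 hL hf1 hf3 (hR jst) rfl h.symm hjst d13 hi1.1 hi3.1
        (fun j hj => hi4z j hj.1)
    -- punch at (i1, j2) and (i1, j3)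
    have hp2 : L 0 i1 j1 = L 0 R j2 := by
      by_contra hne
      have hnf : ¬ IsFixedCell L i1 j2 := fun h => cj12 (hu1 j2 h).symm
      exact forbid hL hnf hne hs12
        (fun h => Ne.symm hi2.1 (hL.2.1 0 j2 h))
        (row_forbids hL hf1 cj12)
        (col_forbids hL (hR j2) (Ne.symm hi1.1))
        (col_forbids hL hf2 d12.symm)
    have hp3 : L 0 i1 j1 = L 0 R j3 := by
      by_contra hne
      have hnf : ¬ IsFixedCell L i1 j3 := fun h => cj13 (hu1 j3 h).symm
      exact forbid hL hnf hne hs13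
        (fun h => Ne.symm hi3.1 (hL.2.1 0 j3 h))
        (row_forbids hL hf1 cj13)
        (col_forbids hL (hR j3) (Ne.symm hi1.1))
        (col_forbids hL hf3 d13.symm)
    exact cj23 (hL.1 0 R (hp2.symm.trans hp3))

end Aux

namespace Aux
variable {L : Fin 4 → Fin 6 → Fin 6 → Fin 6}

lemma noFixedCol (hL : IsMuWayLatinSquare L) (h9 : numFixed L = 9) :
    ∀ c, ¬ (∀ i, IsFixedCell L i c) := by
  intro c hc
  have h9' : numFixed (fun m i j => L m j i) = 9 := by
    rw [transpose_numFixed]; exact h9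
  exact noFixedRow (transpose_is hL) h9' c (fun j => hc j)

lemma col3g (hL : IsMuWayLatinSquare L) (h9 : numFixed L = 9) :
    ∀ (c i1 i2 i3 : Fin 6), i1 ≠ i2 → i1 ≠ i3 → i2 ≠ i3 →
    IsFixedCell L i1 c → IsFixedCell L i2 c → IsFixedCell L i3 c → False := by
  intro c i1 i2 i3 d12 d13 d23 f1 f2 f3
  obtain ⟨i, hi⟩ := not_forall.mp (noFixedCol hL h9 c)
  exact col3 hL f1 f2 f3 d12 d13 d23 hi

lemma exists_row_without (hL : IsMuWayLatinSquare L) (h9 : numFixed L = 9) (s : Fin 6) :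
    ∃ i, ∀ j, ¬ (IsFixedCell L i j ∧ L 0 i j = s) := by
  by_contra hcon
  push_neg at hcon
  choose a haf has using hcon
  have hainj : Function.Injective a := by
    intro p q h
    have hpq : (fun i => L 0 i (a p)) p = (fun i => L 0 i (a p)) q := by
      show L 0 p (a p) = L 0 q (a p)
      rw [has p, h, has q]
    exact hL.2.1 0 (a p) hpq
  have hasur : Function.Surjective a := Finite.injective_iff_surjective.mp hainj
  have hge1 : ∀ i, 1 ≤ rowFixed L i := fun i => rowFixed_pos (haf i)
  have hle2 : ∀ i, rowFixed L i ≤ 2 := by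
    intro i
    refine rowFixed_le_two hL ?_
    by_contra hh; push_neg at hh
    exact noFixedRow hL h9 i hh
  have hsum : ∑ i, rowFixed L i = 9 := by rw [← numFixed_eq_sum]; exact h9
  set T := Finset.univ.filter (fun i => rowFixed L i = 2) with hTdef
  have h69 : 6 + T.card = 9 := by
    have hco : ∀ i : Fin 6, rowFixed L i = 1 + (if rowFixed L i = 2 then 1 else 0) := by
      intro i
      have h1 := hge1 i
      have h2 := hle2 i
      by_cases h : rowFixed L i = 2
      · simp [h]
      · simp only [h, if_false]
        omega
    calc 6 + T.card = ∑ i : Fin 6, (1 + if rowFixed L i = 2 then 1 else 0) := by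
          rw [Finset.sum_add_distrib, Finset.sum_const, ← Finset.card_filter]
          simp [hTdef]
      _ = ∑ i, rowFixed L i := Finset.sum_congr rfl fun i _ => (hco i).symm
      _ = 9 := hsum
  have hT : T.card = 3 := by omega
  obtain ⟨i1, i2, i3, d12, d13, d23, hTeq⟩ := Finset.card_eq_three.mp hT
  have hTmem : ∀ k, k ∈ T ↔ rowFixed L k = 2 := by
    intro k; rw [hTdef]; simp
  -- rows not in T have the single fixed cell (i, a i)
  have hsingle : ∀ i, i ∉ T → ∀ j, IsFixedCell L i j → j = a i := by
    intro i hiT j hj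
    have h1 : rowFixed L i = 1 := by
      have ha := hge1 i
      have hb := hle2 i
      have hc : rowFixed L i ≠ 2 := fun h => hiT ((hTmem i).mpr h)
      omega
    obtain ⟨j0, hj0, hu⟩ := rowOne' h1
    rw [hu j hj, hu (a i) (haf i)]
  obtain ⟨b1, hb1ne, hb1f, hu1⟩ := rowTwo ((hTmem i1).mp (by rw [hTeq]; simp)) (haf i1)
  obtain ⟨b2, hb2ne, hb2f, hu2⟩ := rowTwo ((hTmem i2).mp (by rw [hTeq]; simp)) (haf i2)
  obtain ⟨b3, hb3ne, hb3f, hu3⟩ := rowTwo ((hTmem i3).mp (by rw [hTeq]; simp)) (haf i3)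
  -- the extra cells' symbols differ from s
  have hts : ∀ k bk, IsFixedCell L k bk → bk ≠ a k → L 0 k bk ≠ s := by
    intro k bk hf hne h
    apply hne
    apply hL.1 0 k
    rw [h, has k]
  -- extras lie in pairwise distinct columns
  have hbd : ∀ p q bp bq : Fin 6, p ≠ q → IsFixedCell L p bp → IsFixedCell L q bq →
      bp ≠ a p → bq ≠ a q → bp ≠ bq := by
    intro p q bp bq hpq hfp hfq hbp hbq h
    subst h
    obtain ⟨w, hw⟩ := hasur bp
    have hwp : w ≠ p := by rintro rfl; exact hbp hw.symm
    have hwq : w ≠ q := by rintro rfl; exact hbq hw.symm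
    exact col3g hL h9 bp p q w hpq (Ne.symm hwp) (Ne.symm hwq) hfp hfq (hw ▸ haf w)
  have hbd12 : b1 ≠ b2 := hbd i1 i2 b1 b2 d12 hb1f hb2f hb1ne hb2ne
  have hbd13 : b1 ≠ b3 := hbd i1 i3 b1 b3 d13 hb1f hb3f hb1ne hb3ne
  have hbd23 : b2 ≠ b3 := hbd i2 i3 b2 b3 d23 hb2f hb3f hb2ne hb3ne
  -- the punch: if the extra symbols differ, the extra of q sits above the s-cell of p
  have punch : ∀ p q bp bq : Fin 6, q ≠ p → IsFixedCell L p bp → IsFixedCell L q bq →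
      bp ≠ a p → bq ≠ a q → bq ≠ bp →
      (∀ j, IsFixedCell L p j → j = a p ∨ j = bp) →
      L 0 q bq ≠ L 0 p bp → bq = a p := by
    intro p q bp bq hqp hfp hfq hbp hbq hbpq honly hne
    by_contra hba
    have hnf : ¬ IsFixedCell L p bq := by
      intro h
      rcases honly bq h with h' | h'
      · exact hba h'
      · exact hbpq h'
    have f1 : ∀ m, L m p bq ≠ s := by
      intro m h
      exact row_forbids hL (haf p) (fun h' => hba h'.symm) m (h.trans (has p).symm)
    refine forbid hL hnf (s1 := s) (s2 := L 0 p bp) (s3 := L 0 q bq)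
      (fun h => hts p bp hfp hbp h.symm) (fun h => hts q bq hfq hbq h.symm)
      (fun h => hne h.symm) f1
      (row_forbids hL hfp (fun h => hbpq h.symm))
      (col_forbids hL hfq hqp)
  -- the dance
  by_cases h12 : L 0 i1 b1 = L 0 i2 b2
  · by_cases h13 : L 0 i1 b1 = L 0 i3 b3
    · -- all three extras share a symbol t ≠ s : contradiction via sym3
      have h4 : ({i1, i2, i3} : Finset (Fin 6)).card ≤ 3 := by
        refine le_trans (Finset.card_insert_le _ _) ?_
        refine Nat.add_le_add_right ?_ 1
        refine le_trans (Finset.card_insert_le _ _) ?_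
        simp
      have hpos : 0 < (({i1, i2, i3} : Finset (Fin 6))ᶜ).card := by
        rw [Finset.card_compl]
        have h6 : Fintype.card (Fin 6) = 6 := by simp
        omega
      obtain ⟨i4, hi4⟩ := Finset.card_pos.mp hpos
      simp only [Finset.mem_compl, Finset.mem_insert, Finset.mem_singleton, not_or] at hi4
      have hi4T : i4 ∉ T := by
        rw [hTeq]
        simp only [Finset.mem_insert, Finset.mem_singleton, not_or]
        exact hi4
      refine sym3 hL hb1f hb2f hb3f rfl h12.symm h13.symm d12 d13 d23 (i0 := i4) ?_
      rintro j ⟨hf, hv⟩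
      have hj := hsingle i4 hi4T j hf
      subst hj
      rw [has i4] at hv
      exact hts i1 b1 hb1f hb1ne hv.symm
    · -- t3 ≠ t1 = t2 : b3 over a(i1) and over a(i2), so a(i1)=a(i2)
      have e31 : b3 = a i1 :=
        punch i1 i3 b1 b3 (Ne.symm d13) hb1f hb3f hb1ne hb3ne (Ne.symm hbd13) hu1
          (fun h => h13 h.symm)
      have e32 : b3 = a i2 :=
        punch i2 i3 b2 b3 (Ne.symm d23) hb2f hb3f hb2ne hb3ne (Ne.symm hbd23) hu2
          (fun h => h13 (h12.trans h.symm))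
      exact d12 (hainj (e31.symm.trans e32))
  · -- t1 ≠ t2 : b2 = a(i1), b1 = a(i2)
    have e21 : b2 = a i1 :=
      punch i1 i2 b1 b2 (Ne.symm d12) hb1f hb2f hb1ne hb2ne (Ne.symm hbd12) hu1
        (fun h => h12 h.symm)
    by_cases h13 : L 0 i1 b1 = L 0 i3 b3
    · -- t3 = t1 ≠ t2 : b3 = a(i2) = b1
      have e12 : b1 = a i2 :=
        punch i2 i1 b2 b1 d12 hb2f hb1f hb2ne hb1ne hbd12 hu2 h12
      have e32 : b3 = a i2 :=
        punch i2 i3 b2 b3 (Ne.symm d23) hb2f hb3f hb2ne hb3ne (Ne.symm hbd23) hu2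
          (fun h => h12 (h13.trans h))
      exact hbd13 (e12.trans e32.symm)
    · -- t3 ≠ t1 : b3 = a(i1) = b2
      have e31 : b3 = a i1 :=
        punch i1 i3 b1 b3 (Ne.symm d13) hb1f hb3f hb1ne hb3ne (Ne.symm hbd13) hu1
          (fun h => h13 h.symm)
      exact hbd23 (e21.trans e31.symm)

end Aux

/-- The intersection spectrum `I^μ[n]`. -/
def Spectrum (μ n : ℕ) : Set ℕ :=
  {k | ∃ L : Fin μ → Fin n → Fin n → Fin n, IsMuWayLatinSquare L ∧ numFixed L = k}

open Aux in
theorem stmt_14 : (9 : ℕ) ∉ Spectrum 4 6 := by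
  rintro ⟨L, hL, h9⟩
  have hsum : ∑ i, rowFixed L i = 9 := by rw [← numFixed_eq_sum]; exact h9
  have hle2 : ∀ i, rowFixed L i ≤ 2 := by
    intro i
    refine rowFixed_le_two hL ?_
    by_contra hh; push_neg at hh
    exact noFixedRow hL h9 i hh
  have hcolcard : ∀ c, (Finset.univ.filter fun i => IsFixedCell L i c).card ≤ 2 := by
    intro c
    by_contra h
    push_neg at h
    obtain ⟨p, q, r, hp, hq, hr, dpq, dpr, dqr⟩ := Finset.two_lt_card_iff.mp h
    simp only [Finset.mem_filter, Finset.mem_univ, true_and] at hp hq hr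
    exact col3g hL h9 c p q r dpq dpr dqr hp hq hr
  -- some row has exactly two fixed cells
  have hex2 : ∃ i, rowFixed L i = 2 := by
    by_contra h
    push_neg at h
    have hle1 : ∀ i, rowFixed L i ≤ 1 := by
      intro i
      have h1 := hle2 i
      have h2 := h i
      omega
    have : ∑ i, rowFixed L i ≤ ∑ _i : Fin 6, 1 :=
      Finset.sum_le_sum fun i _ => hle1 i
    simp at this
    omega
  obtain ⟨i, h2⟩ := hex2
  obtain ⟨x, y, hxy, hfx, hfy, honly⟩ := rowTwo' h2
  have hs12 : L 0 i x ≠ L 0 i y := fun h => hxy (hL.1 0 i h)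
  set F := Finset.univ.filter (fun p : Fin 6 × Fin 6 => IsFixedCell L p.1 p.2) with hF
  have hFcard : F.card = 9 := h9
  set G := F.filter (fun p => p.2 ≠ x ∧ p.2 ≠ y) with hG
  -- G is big
  have hGcard : 5 ≤ G.card := by
    have hsub : F ⊆ G ∪ F.filter (fun p => p.2 = x) ∪ F.filter (fun p => p.2 = y) := by
      intro p hp
      simp only [hG, Finset.mem_union, Finset.mem_filter]
      by_cases hx : p.2 = x
      · exact Or.inl (Or.inr ⟨hp, hx⟩)
      by_cases hy : p.2 = y
      · exact Or.inr ⟨hp, hy⟩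
      · exact Or.inl (Or.inl ⟨hp, hx, hy⟩)
    have hcard := Finset.card_le_card hsub
    have hu1 := Finset.card_union_le (G ∪ F.filter (fun p => p.2 = x)) (F.filter (fun p => p.2 = y))
    have hu2 := Finset.card_union_le G (F.filter (fun p => p.2 = x))
    have hFx : ∀ c : Fin 6, (F.filter fun p => p.2 = c).card ≤ 2 := by
      intro c
      refine le_trans (Finset.card_le_card_of_injOn (fun p => p.1) ?_ ?_) (hcolcard c)
      · intro p hp
        simp only [hF, Finset.mem_coe, Finset.mem_filter, Finset.mem_univ, true_and] at hp ⊢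
        exact hp.2 ▸ hp.1
      · intro p hp q hq h
        simp only [hF, Finset.mem_coe, Finset.mem_filter, Finset.mem_univ, true_and] at hp hq
        exact Prod.ext h (hp.2.trans hq.2.symm)
    have h1 := hFx x
    have h2 := hFx y
    omega
  -- every fixed cell outside columns x,y carries symbol L0ix or L0iy
  have hGsym : ∀ p ∈ G, L 0 p.1 p.2 = L 0 i x ∨ L 0 p.1 p.2 = L 0 i y := by
    intro p hp
    simp only [hG, hF, Finset.mem_filter, Finset.mem_univ, true_and] at hp
    obtain ⟨hfix, hnx, hny⟩ := hp
    by_contra hcon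
    push_neg at hcon
    have hpi : p.1 ≠ i := by
      rintro rfl
      rcases honly p.2 hfix with h' | h'
      · exact hnx h'
      · exact hny h'
    have hnf : ¬ IsFixedCell L i p.2 := by
      intro h
      rcases honly p.2 h with h' | h'
      · exact hnx h'
      · exact hny h'
    exact forbid hL hnf hs12 (Ne.symm hcon.1) (Ne.symm hcon.2)
      (row_forbids hL hfx (fun h => hnx h.symm))
      (row_forbids hL hfy (fun h => hny h.symm))
      (col_forbids hL hfix hpi)
  -- but each of the two symbols appears at most once in G
  have hsmall : ∀ (t c0 : Fin 6), IsFixedCell L i c0 → L 0 i c0 = t →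
      (G.filter fun p => L 0 p.1 p.2 = t).card ≤ 1 := by
    intro t c0 hc0 hv
    refine Finset.card_le_one.mpr ?_
    intro p hp q hq
    by_contra hne
    simp only [hG, hF, Finset.mem_filter, Finset.mem_univ, true_and] at hp hq
    obtain ⟨⟨hfp, hpx, hpy⟩, hvp⟩ := hp
    obtain ⟨⟨hfq, hqx, hqy⟩, hvq⟩ := hq
    have hpi : p.1 ≠ i := by
      rintro h
      rcases honly p.2 (h ▸ hfp) with h' | h'
      · exact hpx h'
      · exact hpy h'
    have hqi : q.1 ≠ i := by
      rintro h
      rcases honly q.2 (h ▸ hfq) with h' | h'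
      · exact hqx h'
      · exact hqy h'
    have hpq : p.1 ≠ q.1 := by
      intro h
      apply hne
      refine Prod.ext h ?_
      apply hL.1 0 p.1
      show L 0 p.1 p.2 = L 0 p.1 q.2
      rw [hvp, h, hvq]
    obtain ⟨i0, hi0⟩ := exists_row_without hL h9 t
    exact sym3 hL hfp hfq hc0 hvp hvq hv hpq hpi hqi hi0
  have hsplit : G ⊆ (G.filter fun p => L 0 p.1 p.2 = L 0 i x) ∪
      (G.filter fun p => L 0 p.1 p.2 = L 0 i y) := by
    intro p hp
    rcases hGsym p hp with h | h
    · exact Finset.mem_union_left _ (Finset.mem_filter.mpr ⟨hp, h⟩)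
    · exact Finset.mem_union_right _ (Finset.mem_filter.mpr ⟨hp, h⟩)
  have hc1 := hsmall (L 0 i x) x hfx rfl
  have hc2 := hsmall (L 0 i y) y hfy rfl
  have := Finset.card_le_card hsplit
  have := Finset.card_union_le (G.filter fun p => L 0 p.1 p.2 = L 0 i x)
    (G.filter fun p => L 0 p.1 p.2 = L 0 i y)
  omega
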